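/- Let p be a prime and let R = ℤ_{(p)}[y_1, ..., y_p] and f = p^p + y_1 y_2 ⋯ y_p. Then f ∈ M^p where M = ⟨p, y_1, ..., y_p⟩, and the set of maximal ideals of R at which f has order ≥ p (i.e., f ∈ Q^p for a maximal ideal Q) consists exactly of those maximal ideals containing ⟨p, y_1, ..., y_p⟩. -/

import Mathlib

open MvPolynomial

section Aux

variable {σ : Type*} {A : Type*} [CommRing A]

lemma aux_pderiv_mem (Q : Ideal (MvPolynomial σ A)) :
    ∀ (n : ℕ) (g : MvPolynomial σ A), g ∈ Q ^ (n + 1) → ∀ j, pderiv j g ∈ Q ^ n := by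
  intro n
  induction n with
  | zero => intro g _ j; simp
  | succ n ih =>
      intro g hg j
      rw [pow_succ] at hg
      refine Submodule.mul_induction_on hg (fun a ha b hb => ?_) (fun x y hx hy => ?_)
      · rw [pderiv_mul]
        refine Ideal.add_mem _ ?_ ?_
        · rw [pow_succ]; exact Ideal.mul_mem_mul (ih a ha j) hb
        · exact Ideal.mul_mem_right _ _ ha
      · simpa using Ideal.add_mem _ hx hy

lemma aux_foldr_mem (Q : Ideal (MvPolynomial σ A)) (l : List σ) :
    ∀ (n : ℕ) (g : MvPolynomial σ A), g ∈ Q ^ (l.length + n) →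
      l.foldr (fun j h => pderiv j h) g ∈ Q ^ n := by
  induction l with
  | nil => intro n g hg; simpa using hg
  | cons j l ih =>
      intro n g hg
      simp only [List.foldr_cons]
      refine aux_pderiv_mem Q n _ ?_ j
      refine ih (n + 1) g ?_
      rwa [show l.length + (n + 1) = (j :: l).length + n by simp; omega]

lemma aux_pderiv_prod_zero [DecidableEq σ] (s : Finset σ) (j : σ) (hj : j ∉ s) :
    pderiv j (∏ i ∈ s, X i : MvPolynomial σ A) = 0 := by
  induction s using Finset.induction with
  | empty => simp
  | insert a s hx ih =>
      rw [Finset.prod_insert hx, pderiv_mul,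
        pderiv_X_of_ne (by rintro rfl; exact hj (Finset.mem_insert_self _ _)),
        ih (fun h => hj (Finset.mem_insert_of_mem h))]
      simp

lemma aux_foldr_prod [Fintype σ] [DecidableEq σ] (l : List σ) (hl : l.Nodup) :
    l.foldr (fun j h => pderiv j h) (∏ i : σ, X i : MvPolynomial σ A) =
      ∏ i ∈ Finset.univ \ l.toFinset, X i := by
  induction l with
  | nil => simp
  | cons j l ih =>
      obtain ⟨hj, hl'⟩ := List.nodup_cons.mp hl
      simp only [List.foldr_cons, ih hl']
      have hjmem : j ∈ Finset.univ \ l.toFinset := by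
        simp [List.mem_toFinset.not.mpr hj]
      rw [← Finset.prod_erase_mul _ _ hjmem, pderiv_mul, pderiv_X_self,
        aux_pderiv_prod_zero _ j (by simp)]
      have : (Finset.univ \ l.toFinset).erase j = Finset.univ \ (j :: l).toFinset := by
        ext x; simp [Finset.mem_erase, and_comm, eq_comm]
      rw [this]; ring

lemma aux_foldr_add_C (c : A) (g : MvPolynomial σ A) (l : List σ) (hl : l ≠ []) :
    l.foldr (fun j h => pderiv j h) (C c + g) = l.foldr (fun j h => pderiv j h) g := by
  induction l with
  | nil => exact absurd rfl hl
  | cons j l ih =>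
      cases l with
      | nil => simp
      | cons k l => simp only [List.foldr_cons] at ih ⊢; rw [ih (by simp)]

lemma aux_prod_mem_pow {R : Type*} [CommRing R] (I : Ideal R) {ι : Type*} [DecidableEq ι] (s : Finset ι)
    (x : ι → R) (hx : ∀ i ∈ s, x i ∈ I) : (∏ i ∈ s, x i) ∈ I ^ s.card := by
  induction s using Finset.induction with
  | empty => simp
  | insert a s h ih =>
      rw [Finset.prod_insert h, Finset.card_insert_of_notMem h, pow_succ, mul_comm (I ^ s.card)]
      exact Ideal.mul_mem_mul (hx a (Finset.mem_insert_self _ _))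
        (ih fun i hi => hx i (Finset.mem_insert_of_mem hi))

end Aux

/-- Let `p` be prime, `R = ℤ_{(p)}[y_1,…,y_p]` and `f = p^p + y_1 ⋯ y_p`.  Then
`f ∈ M^p` for `M = ⟨p, y_1,…,y_p⟩`, and a maximal ideal `Q` of `R` satisfies `f ∈ Q^p`
exactly when `Q` contains `⟨p, y_1,…,y_p⟩`. -/
theorem order_p_locus_of_arithmetic_example (p : ℕ) (hp : p.Prime)
    [inst : (Ideal.span {(p : ℤ)}).IsPrime] :
    letI Zp := Localization.AtPrime (Ideal.span {(p : ℤ)})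
    letI R := MvPolynomial (Fin p) Zp
    letI f : R := C ((p : Zp) ^ p) + ∏ i : Fin p, X i
    letI M : Ideal R := Ideal.span (insert (C (p : Zp)) (Set.range X))
    f ∈ M ^ p ∧ ∀ Q : Ideal R, Q.IsMaximal → (f ∈ Q ^ p ↔ M ≤ Q) := by
  set Zp := Localization.AtPrime (Ideal.span {(p : ℤ)}) with hZp
  set R := MvPolynomial (Fin p) Zp with hR
  set f : R := C ((p : Zp) ^ p) + ∏ i : Fin p, X i with hf
  set M : Ideal R := Ideal.span (insert (C (p : Zp)) (Set.range X)) with hM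
  have hpC : (C (p : Zp) : R) ∈ M := Ideal.subset_span (Set.mem_insert _ _)
  have hX : ∀ i, (X i : R) ∈ M := fun i =>
    Ideal.subset_span (Set.mem_insert_of_mem _ ⟨i, rfl⟩)
  have hfM : f ∈ M ^ p := by
    refine Ideal.add_mem _ ?_ ?_
    · rw [show (C ((p : Zp) ^ p) : R) = (C (p : Zp)) ^ p by rw [map_pow]]
      exact Ideal.pow_mem_pow hpC p
    · have := aux_prod_mem_pow M Finset.univ (fun i : Fin p => (X i : R)) (fun i _ => hX i)
      simpa using this
  refine ⟨hfM, fun Q hQ => ⟨fun hfQ => ?_, fun hMQ => (Ideal.pow_right_mono hMQ p) hfM⟩⟩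
  have hQp : Q.IsPrime := hQ.isPrime
  -- every variable is in Q
  have hXQ : ∀ i : Fin p, (X i : R) ∈ Q := by
    intro i
    set l : List (Fin p) := (Finset.univ.erase i).toList with hl
    have hnd : l.Nodup := Finset.nodup_toList _
    have hlen : l.length = p - 1 := by
      simp [hl, Finset.length_toList, Finset.card_erase_of_mem]
    have hlne : l ≠ [] := by
      intro h
      rw [h] at hlen
      have := hp.two_le
      simp at hlen
      omega
    have hplen : l.length + 1 = p := by
      have := hp.two_le; omega
    have h1 : l.foldr (fun j h => pderiv j h) f ∈ Q ^ 1 := by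
      refine aux_foldr_mem Q l 1 f ?_
      rwa [hplen]
    have h2 : l.foldr (fun j h => pderiv j h) f = X i := by
      rw [aux_foldr_add_C _ _ _ hlne, aux_foldr_prod l hnd]
      have : Finset.univ \ l.toFinset = {i} := by
        ext x
        simp [hl, Finset.mem_erase]
      rw [this, Finset.prod_singleton]
    rw [h2, pow_one] at h1
    exact h1
  -- p is in Q
  have i0 : Fin p := ⟨0, hp.pos⟩
  have hprodQ : (∏ i : Fin p, (X i : R)) ∈ Q := by
    rw [← Finset.prod_erase_mul _ _ (Finset.mem_univ i0)]
    exact Ideal.mul_mem_left _ _ (hXQ i0)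
  have hCQ : (C ((p : Zp) ^ p) : R) ∈ Q := by
    have : (C ((p : Zp) ^ p) : R) = f - ∏ i : Fin p, X i := by ring
    rw [this]
    exact Ideal.sub_mem _ ((Ideal.pow_le_self (by have := hp.two_le; omega)) hfQ) hprodQ
  have hpQ : (C (p : Zp) : R) ∈ Q := by
    refine hQp.mem_of_pow_mem p ?_
    rwa [← map_pow]
  rw [Ideal.span_le]
  rintro x (rfl | ⟨i, rfl⟩)
  · exact hpQ
  · exact hXQ i
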